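/- For every natural number ℓ ≥ 0, the sunlet graph S_n with n = 9 + 4ℓ satisfies r^+_χ(S_n) = n; that is, χ(S_n) = 3 and the maximum, over all proper 3-colourings c of S_n, of the number of vertices yielding a rainbow neighbourhood with respect to c equals n (exactly the n cycle vertices can be made to yield, and no pendant vertex can yield). -/

import Mathlib

open SimpleGraph

/-- A vertex `v` yields a rainbow neighbourhood w.r.t. the colouring `c` if its closed
neighbourhood `N[v]` contains a vertex of every colour class. -/
def yieldsRainbow {V : Type*} {k : ℕ} (G : SimpleGraph V) (c : G.Coloring (Fin k)) (v : V) :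
    Prop :=
  ∀ i : Fin k, ∃ u : V, (u = v ∨ G.Adj v u) ∧ c u = i

/-- The number of vertices yielding a rainbow neighbourhood w.r.t. `c`. -/
noncomputable def rainbowCount {V : Type*} [Fintype V] {k : ℕ} (G : SimpleGraph V)
    (c : G.Coloring (Fin k)) : ℕ :=
  Nat.card {v : V // yieldsRainbow G c v}

/-- The minimum number of vertices yielding a rainbow neighbourhood, over all proper
colourings with exactly `k` colours. -/
noncomputable def rMin {V : Type*} [Fintype V] (G : SimpleGraph V) (k : ℕ) : ℕ :=
  sInf (Set.range fun c : G.Coloring (Fin k) => rainbowCount G c)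

/-- The maximum number of vertices yielding a rainbow neighbourhood, over all proper
colourings with exactly `k` colours. -/
noncomputable def rMax {V : Type*} [Fintype V] (G : SimpleGraph V) (k : ℕ) : ℕ :=
  sSup (Set.range fun c : G.Coloring (Fin k) => rainbowCount G c)


/-- The sunlet graph `S_n` on `2n` vertices: `Sum.inl i` are the cycle vertices
(adjacent as in `C_n`), and `Sum.inr i` is the pendant vertex attached to `Sum.inl i`. -/
def sunletGraph (n : ℕ) : SimpleGraph (Fin n ⊕ Fin n) where
  Adj x y :=
    match x, y with
    | Sum.inl i, Sum.inl j => (SimpleGraph.cycleGraph n).Adj i j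
    | Sum.inl i, Sum.inr j => i = j
    | Sum.inr i, Sum.inl j => i = j
    | Sum.inr _, Sum.inr _ => False
  symm := by
    constructor
    rintro (i | i) (j | j) h <;> simp_all
    all_goals exact (SimpleGraph.cycleGraph n).adj_symm h
  loopless := by
    constructor
    rintro (i | i) h <;> simp_all


namespace SunletAux

/-- The third colour, distinct from two distinct colours `a b : Fin 3`. -/
def third (a b : Fin 3) : Fin 3 := ⟨(3 - a.val - b.val) % 3, Nat.mod_lt _ (by norm_num)⟩

lemma third_facts : ∀ a b : Fin 3, a ≠ b →
    third a b ≠ a ∧ third a b ≠ b ∧ ∀ i : Fin 3, i = a ∨ i = b ∨ i = third a b := by decide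

lemma fin2_flip : ∀ a b x : Fin 2, a ≠ b → (b = x ↔ ¬ a = x) := by decide

lemma fin3_pigeon : ∀ a b : Fin 3, ¬ ∀ t : Fin 3, t = a ∨ t = b := by decide

/-- The cycle colouring: parity, except the last vertex gets colour 2. -/
def fCol (n : ℕ) (i : Fin n) : Fin 3 :=
  if i.val + 1 = n then 2 else ⟨i.val % 2, by omega⟩

lemma sub_val_cases {n : ℕ} (hn : 3 ≤ n) {i j : Fin n} (h : (j - i).val = 1) :
    j.val = i.val + 1 ∨ (i.val + 1 = n ∧ j.val = 0) := by
  have hi := i.isLt; have hj := j.isLt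
  rw [Fin.sub_def] at h
  simp only at h
  rcases Nat.lt_or_ge ((n - i.val) + j.val) n with hlt | hge
  · rw [Nat.mod_eq_of_lt hlt] at h; omega
  · rw [Nat.mod_eq_sub_mod hge, Nat.mod_eq_of_lt (by omega)] at h; omega

lemma adj_succ {n : ℕ} (hn : 3 ≤ n) {i j : Fin n} (h : (i.val + 1) % n = j.val) :
    (cycleGraph n).Adj i j := by
  have hi := i.isLt; have hj := j.isLt
  rw [cycleGraph_adj']
  right
  rw [Fin.sub_def]
  simp only
  rcases Nat.lt_or_ge (i.val + 1) n with hlt | hge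
  · rw [Nat.mod_eq_of_lt hlt] at h
    have : (n - i.val) + j.val = n + 1 := by omega
    rw [this]
    rw [show n + 1 = 1 + n by omega, Nat.add_mod_right, Nat.mod_eq_of_lt (by omega)]
  · have hin : i.val + 1 = n := by omega
    rw [hin, Nat.mod_self] at h
    have : (n - i.val) + j.val = 1 := by omega
    rw [this, Nat.mod_eq_of_lt (by omega)]

lemma fCol_ne_of_succ {n : ℕ} (hn : 3 ≤ n) {i j : Fin n}
    (h : j.val = i.val + 1 ∨ (i.val + 1 = n ∧ j.val = 0)) : fCol n i ≠ fCol n j := by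
  have hi := i.isLt; have hj := j.isLt
  rcases h with h | ⟨h1, h2⟩
  · have hii : ¬ (i.val + 1 = n) := by omega
    by_cases hji : j.val + 1 = n
    · simp only [fCol, if_pos hji, if_neg hii]
      intro he
      have := congrArg Fin.val he
      simp only [Fin.val_two] at this
      omega
    · simp only [fCol, if_neg hji, if_neg hii]
      intro he
      have := congrArg Fin.val he
      simp only at this
      omega
  · have hji : ¬ (j.val + 1 = n) := by omega
    simp only [fCol, if_pos h1, if_neg hji]
    intro he
    have := congrArg Fin.val he
    simp only [Fin.val_two] at this
    omega

lemma fCol_proper {n : ℕ} (hn : 3 ≤ n) {i j : Fin n} (h : (cycleGraph n).Adj i j) :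
    fCol n i ≠ fCol n j := by
  rw [cycleGraph_adj'] at h
  rcases h with h | h
  · exact (fCol_ne_of_succ hn (sub_val_cases hn h)).symm
  · exact fCol_ne_of_succ hn (sub_val_cases hn h)

/-- The predecessor of `i` on the cycle. -/
def prev (n : ℕ) (hn : 3 ≤ n) (i : Fin n) : Fin n :=
  ⟨(i.val + (n - 1)) % n, Nat.mod_lt _ (by omega)⟩

lemma prev_adj {n : ℕ} (hn : 3 ≤ n) (i : Fin n) : (cycleGraph n).Adj (prev n hn i) i := by
  apply adj_succ hn
  show ((i.val + (n - 1)) % n + 1) % n = i.val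
  rw [Nat.mod_add_mod]
  have : i.val + (n - 1) + 1 = i.val + n := by omega
  rw [this, Nat.add_mod_right, Nat.mod_eq_of_lt i.isLt]

/-- The colouring of the sunlet graph. -/
def sunCol (n : ℕ) (hn : 3 ≤ n) : (sunletGraph n).Coloring (Fin 3) :=
  Coloring.mk
    (Sum.elim (fCol n) (fun j => third (fCol n (prev n hn j)) (fCol n j)))
    (by
      rintro (i | i) (j | j) hadj
      · exact fCol_proper hn hadj
      · have hij : i = j := hadj
        subst hij
        simp only [Sum.elim_inl, Sum.elim_inr]
        intro he
        exact (third_facts _ _ (fCol_proper hn (prev_adj hn i))).2.1 he.symm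
      · have hij : i = j := hadj
        subst hij
        simp only [Sum.elim_inl, Sum.elim_inr]
        exact (third_facts _ _ (fCol_proper hn (prev_adj hn i))).2.1
      · exact hadj.elim)

lemma yields_inl {n : ℕ} (hn : 3 ≤ n) (i : Fin n) :
    yieldsRainbow (sunletGraph n) (sunCol n hn) (Sum.inl i) := by
  intro t
  have hne : fCol n (prev n hn i) ≠ fCol n i := fCol_proper hn (prev_adj hn i)
  rcases (third_facts _ _ hne).2.2 t with h | h | h
  · exact ⟨Sum.inl (prev n hn i), Or.inr ((prev_adj hn i).symm), h.symm⟩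
  · exact ⟨Sum.inl i, Or.inl rfl, h.symm⟩
  · exact ⟨Sum.inr i, Or.inr rfl, h.symm⟩

lemma not_yields_inr {n : ℕ} (c : (sunletGraph n).Coloring (Fin 3)) (j : Fin n) :
    ¬ yieldsRainbow (sunletGraph n) c (Sum.inr j) := by
  intro h
  apply fin3_pigeon (c (Sum.inr j)) (c (Sum.inl j))
  intro t
  obtain ⟨u, hu, hcu⟩ := h t
  rcases hu with rfl | hadj
  · exact Or.inl hcu.symm
  · match u with
    | Sum.inl k =>
      have hjk : j = k := hadj
      subst hjk
      exact Or.inr hcu.symm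
    | Sum.inr k => exact hadj.elim

lemma no_two_coloring {n : ℕ} (hn : 3 ≤ n) (hodd : n % 2 = 1) :
    ¬ (sunletGraph n).Colorable 2 := by
  rintro ⟨c⟩
  set g : Fin n → Fin 2 := fun i => c (Sum.inl i) with hg
  have hadj : ∀ i j : Fin n, (cycleGraph n).Adj i j → g i ≠ g j := by
    intro i j h
    exact c.valid (show (sunletGraph n).Adj (Sum.inl i) (Sum.inl j) from h)
  have main : ∀ k, (hk : k < n) → (g ⟨k, hk⟩ = g ⟨0, by omega⟩ ↔ k % 2 = 0) := by
    intro k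
    induction k with
    | zero => intro hk; simp
    | succ m ih =>
      intro hk
      have hm : m < n := by omega
      have hadj' : (cycleGraph n).Adj ⟨m, hm⟩ ⟨m + 1, hk⟩ :=
        adj_succ hn (by simp [Nat.mod_eq_of_lt hk])
      have h1 := hadj _ _ hadj'
      rw [fin2_flip _ _ _ h1, ih hm]
      omega
  have hwrap : (cycleGraph n).Adj ⟨n - 1, by omega⟩ ⟨0, by omega⟩ := by
    apply adj_succ hn
    show (n - 1 + 1) % n = 0
    rw [Nat.sub_add_cancel (by omega), Nat.mod_self]
  have h1 := hadj _ _ hwrap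
  have h2 := (main (n - 1) (by omega)).mpr (by omega)
  exact h1 h2

lemma sunlet_count_le {n : ℕ} (c : (sunletGraph n).Coloring (Fin 3)) :
    rainbowCount (sunletGraph n) c ≤ n := by
  have hinj : Function.Injective
      (fun v : {v // yieldsRainbow (sunletGraph n) c v} => Sum.elim id id v.1) := by
    rintro ⟨(a | a), ha⟩ ⟨(b | b), hb⟩ h
    · simpa [Subtype.ext_iff] using h
    · exact absurd hb (not_yields_inr c b)
    · exact absurd ha (not_yields_inr c a)
    · exact absurd ha (not_yields_inr c a)
  calc rainbowCount (sunletGraph n) c ≤ Nat.card (Fin n) :=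
        Nat.card_le_card_of_injective _ hinj
    _ = n := by simp

lemma sunlet_count_ge {n : ℕ} (hn : 3 ≤ n) :
    n ≤ rainbowCount (sunletGraph n) (sunCol n hn) := by
  have hinj : Function.Injective
      (fun i : Fin n => (⟨Sum.inl i, yields_inl hn i⟩ :
        {v // yieldsRainbow (sunletGraph n) (sunCol n hn) v})) := by
    intro a b h
    simpa [Subtype.ext_iff] using h
  calc n = Nat.card (Fin n) := by simp
    _ ≤ rainbowCount (sunletGraph n) (sunCol n hn) := Nat.card_le_card_of_injective _ hinj

end SunletAux

/-- For `n = 9 + 4ℓ`, the sunlet graph `S_n` has `χ = 3` and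
`r⁺_χ(S_n) = n`: some proper 3-colouring makes all `n` cycle vertices yield rainbow
neighbourhoods, while no pendant vertex ever yields one. -/
theorem rMax_sunlet_nine_plus (ℓ : ℕ) :
    (sunletGraph (9 + 4 * ℓ)).chromaticNumber = 3 ∧
      rMax (sunletGraph (9 + 4 * ℓ)) 3 = 9 + 4 * ℓ ∧
      (∃ c : (sunletGraph (9 + 4 * ℓ)).Coloring (Fin 3),
        ∀ i : Fin (9 + 4 * ℓ), yieldsRainbow (sunletGraph (9 + 4 * ℓ)) c (Sum.inl i)) ∧
      (∀ c : (sunletGraph (9 + 4 * ℓ)).Coloring (Fin 3),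
        ∀ j : Fin (9 + 4 * ℓ), ¬ yieldsRainbow (sunletGraph (9 + 4 * ℓ)) c (Sum.inr j)) := by
  have hn : 3 ≤ 9 + 4 * ℓ := by omega
  have hodd : (9 + 4 * ℓ) % 2 = 1 := by omega
  set n := 9 + 4 * ℓ with hndef
  refine ⟨?_, ?_, ⟨SunletAux.sunCol n hn, SunletAux.yields_inl hn⟩,
    fun c j => SunletAux.not_yields_inr c j⟩
  · apply le_antisymm
    · have : (sunletGraph n).Colorable 3 := ⟨SunletAux.sunCol n hn⟩
      exact_mod_cast this.chromaticNumber_le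
    · by_contra h
      push_neg at h
      have h2 : (sunletGraph n).chromaticNumber ≤ (2 : ℕ) := by
        exact Order.le_of_lt_add_one (by exact_mod_cast h)
      rw [chromaticNumber_le_iff_colorable] at h2
      exact SunletAux.no_two_coloring hn hodd h2
  · have hbdd : ∀ x ∈ Set.range (fun c : (sunletGraph n).Coloring (Fin 3) =>
        rainbowCount (sunletGraph n) c), x ≤ n := by
      rintro x ⟨c, rfl⟩
      exact SunletAux.sunlet_count_le c
    apply le_antisymm
    · exact csSup_le ⟨_, ⟨SunletAux.sunCol n hn, rfl⟩⟩ hbdd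
    · calc n ≤ rainbowCount (sunletGraph n) (SunletAux.sunCol n hn) :=
            SunletAux.sunlet_count_ge hn
        _ ≤ _ := le_csSup ⟨n, hbdd⟩ ⟨SunletAux.sunCol n hn, rfl⟩
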